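/- Let C ≥ 1 and fix a point v ∈ ℝ^d with ‖v‖ ≤ C. Let x be a random vector in ℝ^d distributed as (1/√d)·N(0, I_d), i.e. with i.i.d. N(0, 1/d) coordinates. If d ≤ (log n)/(10·C²) and n is sufficiently large, then Pr(‖x − v‖ ≤ 1/C) ≥ n^{−1/10}. -/

import Mathlib

open MeasureTheory ProbabilityTheory
open scoped ENNReal NNReal Classical

noncomputable section

/-- The distribution `(1/√d)·N(0, I_d)`: a vector with i.i.d. `N(0, 1/d)` coordinates. -/
def stdScaledGauss (d : ℕ) : Measure (Fin d → ℝ) :=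
  Measure.pi fun _ => gaussianReal 0 ((d : ℝ≥0))⁻¹

/-- View a coordinate vector as a point of Euclidean space (with the `ℓ²` norm). -/
def toEuc {d : ℕ} (x : Fin d → ℝ) : EuclideanSpace ℝ (Fin d) := WithLp.toLp 2 x

open intervalIntegral Set

set_option linter.unreachableTactic false
set_option linter.unusedTactic false
set_option linter.unnecessarySeqFocus false
set_option linter.deprecated false

lemma exp_avg (A B : ℝ) : Real.exp ((A+B)/2) ≤ (Real.exp A + Real.exp B)/2 := by
  have h := sq_nonneg (Real.exp (A/2) - Real.exp (B/2))
  have e1 : Real.exp (A/2) * Real.exp (A/2) = Real.exp A := by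
    rw [← Real.exp_add]; ring_nf
  have e2 : Real.exp (B/2) * Real.exp (B/2) = Real.exp B := by
    rw [← Real.exp_add]; ring_nf
  have e3 : Real.exp (A/2) * Real.exp (B/2) = Real.exp ((A+B)/2) := by
    rw [← Real.exp_add]; ring_nf
  nlinarith

lemma oneD (v : ℝ≥0) (hv : v ≠ 0) (m a : ℝ) (ha : 0 ≤ a) :
    ENNReal.ofReal (Real.exp (-m^2/(2*(v:ℝ))) *
        ((Real.sqrt (2*Real.pi*(v:ℝ)))⁻¹ * (2*a - a^3/(3*(v:ℝ)))))
      ≤ gaussianReal 0 v (Set.Icc (m-a) (m+a)) := by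
  have hv0 : (0:ℝ) < (v:ℝ) := NNReal.coe_pos.mpr (zero_lt_iff.mpr hv)
  rw [gaussianReal_apply_eq_integral 0 hv]
  apply ENNReal.ofReal_le_ofReal
  set c : ℝ := (Real.sqrt (2*Real.pi*(v:ℝ)))⁻¹ with hc
  have hc0 : 0 ≤ c := by positivity
  have hpdf : ∀ x, gaussianPDFReal 0 v x = c * Real.exp (-x^2/(2*(v:ℝ))) := by
    intro x; simp [gaussianPDFReal, hc]
  have hcp : Continuous (fun s : ℝ => Real.exp (-(m+s)^2/(2*(v:ℝ)))) := by fun_prop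
  have hcm : Continuous (fun s : ℝ => Real.exp (-(m-s)^2/(2*(v:ℝ)))) := by fun_prop
  have hc2 : Continuous (fun s : ℝ => Real.exp (-m^2/(2*(v:ℝ))) * Real.exp (-s^2/(2*(v:ℝ)))) := by
    fun_prop
  have hc3 : Continuous (fun s : ℝ => 1 - s^2/(2*(v:ℝ))) := by fun_prop
  have hc4 : Continuous (fun s : ℝ => Real.exp (-s^2/(2*(v:ℝ)))) := by fun_prop
  -- rewrite set integral as interval integral
  have hIcc : ∫ x in Set.Icc (m-a) (m+a), gaussianPDFReal 0 v x
      = ∫ x in (m-a)..(m+a), c * Real.exp (-x^2/(2*(v:ℝ))) := by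
    rw [MeasureTheory.integral_Icc_eq_integral_Ioc,
      ← intervalIntegral.integral_of_le (by linarith)]
    simp_rw [hpdf]
  rw [hIcc, intervalIntegral.integral_const_mul]
  -- change of variables
  have hcv : ∫ x in (m-a)..(m+a), Real.exp (-x^2/(2*(v:ℝ)))
      = ∫ s in (-a)..a, Real.exp (-(m+s)^2/(2*(v:ℝ))) := by
    rw [intervalIntegral.integral_comp_add_left (fun x => Real.exp (-x^2/(2*(v:ℝ)))) m]
    congr 1 <;> ring
  rw [hcv]
  -- symmetrization
  have h1 : ∫ s in (-a)..a, Real.exp (-(m-s)^2/(2*(v:ℝ)))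
      = ∫ s in (-a)..a, Real.exp (-(m+s)^2/(2*(v:ℝ))) := by
    have := intervalIntegral.integral_comp_neg
      (a := -a) (b := a) (fun s => Real.exp (-(m+s)^2/(2*(v:ℝ))))
    simp only [neg_neg] at this
    rw [← this]
    apply intervalIntegral.integral_congr
    intro s _
    ring_nf
  have hsym : ∫ s in (-a)..a, Real.exp (-(m+s)^2/(2*(v:ℝ)))
      = ∫ s in (-a)..a, (Real.exp (-(m+s)^2/(2*(v:ℝ))) + Real.exp (-(m-s)^2/(2*(v:ℝ))))/2 := by
    rw [intervalIntegral.integral_div, intervalIntegral.integral_add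
      (hcp.intervalIntegrable _ _) (hcm.intervalIntegrable _ _), h1]
    ring
  rw [hsym]
  -- pointwise bound and monotonicity
  have step1 : ∫ s in (-a)..a, Real.exp (-m^2/(2*(v:ℝ))) * Real.exp (-s^2/(2*(v:ℝ)))
      ≤ ∫ s in (-a)..a, (Real.exp (-(m+s)^2/(2*(v:ℝ))) + Real.exp (-(m-s)^2/(2*(v:ℝ))))/2 := by
    apply intervalIntegral.integral_mono_on (by linarith)
      (hc2.intervalIntegrable _ _) (((hcp.add hcm).div_const 2).intervalIntegrable _ _)
    intro s _
    rw [← Real.exp_add]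
    have harg : -m^2/(2*(v:ℝ)) + -s^2/(2*(v:ℝ))
        = ((-(m+s)^2/(2*(v:ℝ))) + (-(m-s)^2/(2*(v:ℝ))))/2 := by
      field_simp; ring
    rw [harg]
    exact exp_avg _ _
  have step2 : ∫ s in (-a)..a, (1 - s^2/(2*(v:ℝ)))
      ≤ ∫ s in (-a)..a, Real.exp (-s^2/(2*(v:ℝ))) := by
    apply intervalIntegral.integral_mono_on (by linarith)
      (hc3.intervalIntegrable _ _) (hc4.intervalIntegrable _ _)
    intro s _
    have h := Real.add_one_le_exp (-(s^2/(2*(v:ℝ))))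
    have h2 : -s^2/(2*(v:ℝ)) = -(s^2/(2*(v:ℝ))) := neg_div _ _
    rw [h2]
    linarith
  have step3 : ∫ s in (-a)..a, (1 - s^2/(2*(v:ℝ))) = 2*a - a^3/(3*(v:ℝ)) := by
    have hsq : ∫ s in (-a)..a, s^2 = (a^3 - (-a)^3)/3 := by
      have h := integral_pow (a := -a) (b := a) 2
      norm_num at h
      convert h using 2 <;> norm_num
    rw [intervalIntegral.integral_sub (intervalIntegrable_const)
      ((continuous_pow 2 |>.div_const _).intervalIntegrable _ _)]
    simp only [intervalIntegral.integral_div, hsq, intervalIntegral.integral_const, smul_eq_mul]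
    field_simp; ring
  have step4 : ∫ s in (-a)..a, Real.exp (-m^2/(2*(v:ℝ))) * Real.exp (-s^2/(2*(v:ℝ)))
      = Real.exp (-m^2/(2*(v:ℝ))) * ∫ s in (-a)..a, Real.exp (-s^2/(2*(v:ℝ))) := by
    exact intervalIntegral.integral_const_mul _ _
  have hfinal : Real.exp (-m^2/(2*(v:ℝ))) * (2*a - a^3/(3*(v:ℝ)))
      ≤ ∫ s in (-a)..a, (Real.exp (-(m+s)^2/(2*(v:ℝ))) + Real.exp (-(m-s)^2/(2*(v:ℝ))))/2 := by
    refine le_trans ?_ step1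
    rw [step4]
    have := mul_le_mul_of_nonneg_left (step3 ▸ step2) (Real.exp_nonneg (-m^2/(2*(v:ℝ))))
    linarith
  nlinarith [mul_le_mul_of_nonneg_left hfinal hc0,
    Real.exp_nonneg (-m^2/(2*(v:ℝ)))]

-- numeric lemma: K ≥ exp(-C²/2)
lemma Kbound (C : ℝ) (hC : 1 ≤ C) :
    Real.exp (-C^2/2) ≤ (2 - 1/(3*C^2))/(C*Real.sqrt (2*Real.pi)) := by
  have hC0 : (0:ℝ) < C := by linarith
  have hpi := Real.pi_pos
  have hs : Real.sqrt (2*Real.pi) ≤ 2.51 := by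
    rw [show (2.51:ℝ) = Real.sqrt (2.51^2) from (Real.sqrt_sq (by norm_num)).symm]
    apply Real.sqrt_le_sqrt
    nlinarith [Real.pi_lt_d2]
  have hm : Real.exp (1/2) * Real.exp (1/2) = Real.exp 1 := by
    rw [← Real.exp_add]; norm_num
  have hehalf : (1.64:ℝ) ≤ Real.exp (1/2) := by
    nlinarith [Real.exp_one_gt_d9, Real.exp_pos (1/2)]
  have hmul : Real.exp (-(1:ℝ)/2) * Real.exp ((1:ℝ)/2) = 1 := by
    rw [← Real.exp_add]; norm_num
  have h3 : Real.exp (-(1:ℝ)/2) ≤ 1/1.64 := by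
    nlinarith [Real.exp_pos (-(1:ℝ)/2)]
  -- C * exp(-C²/2) ≤ exp(-1/2)
  have h1 : C ≤ Real.exp ((C^2-1)/2) := by
    nlinarith [Real.add_one_le_exp ((C^2-1)/2)]
  have h2 : Real.exp (-C^2/2) * C ≤ Real.exp (-(1:ℝ)/2) := by
    calc Real.exp (-C^2/2) * C ≤ Real.exp (-C^2/2) * Real.exp ((C^2-1)/2) :=
          mul_le_mul_of_nonneg_left h1 (Real.exp_nonneg _)
      _ = Real.exp (-(1:ℝ)/2) := by rw [← Real.exp_add]; congr 1; ring
  -- assemble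
  have hsp : (0:ℝ) < Real.sqrt (2*Real.pi) := Real.sqrt_pos.mpr (by positivity)
  have h4 : (1:ℝ)/(3*C^2) ≤ 1/3 :=
    one_div_le_one_div_of_le (by norm_num) (by nlinarith)
  rw [le_div_iff₀ (by positivity)]
  have h5 : Real.exp (-C^2/2) * C ≤ 1/1.64 := le_trans h2 h3
  calc Real.exp (-C^2/2) * (C * Real.sqrt (2*Real.pi))
      = (Real.exp (-C^2/2) * C) * Real.sqrt (2*Real.pi) := by ring
    _ ≤ (1/1.64) * 2.51 := mul_le_mul h5 hs hsp.le (by norm_num)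
    _ ≤ 2 - 1/(3*C^2) := by
        have : (1/1.64:ℝ) * 2.51 ≤ 5/3 := by norm_num
        linarith

/-- Lemma: a scaled Gaussian vector lands within distance `1/C` of a
fixed point `v` of norm at most `C` with probability at least `n^{-1/10}`, provided
`d ≤ log n/(10 C²)` and `n` is sufficiently large. -/
theorem gaussian_near_fixed_point (C : ℝ) (hC : 1 ≤ C) :
    ∃ N : ℕ, ∀ n : ℕ, N ≤ n → ∀ d : ℕ, 0 < d →
      (d : ℝ) ≤ Real.log n / (10 * C ^ 2) →
      ∀ v : EuclideanSpace ℝ (Fin d), ‖v‖ ≤ C →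
        ENNReal.ofReal ((n : ℝ) ^ (-(1 : ℝ) / 10))
          ≤ stdScaledGauss d {x | ‖toEuc x - v‖ ≤ 1 / C} := by
  refine ⟨1, fun n hn d hd hdlog v hv => ?_⟩
  have hC0 : (0:ℝ) < C := lt_of_lt_of_le one_pos hC
  have hd0 : (0:ℝ) < (d:ℝ) := by exact_mod_cast hd
  have hn0 : (0:ℝ) < (n:ℝ) := by exact_mod_cast hn
  set a : ℝ := 1/(C*Real.sqrt d) with ha_def
  have hsd : 0 < Real.sqrt d := Real.sqrt_pos.mpr hd0
  have ha : 0 < a := by positivity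
  have ha2 : a^2 * (d:ℝ) = 1/C^2 := by
    rw [ha_def, div_pow, mul_pow, Real.sq_sqrt hd0.le, one_pow]
    field_simp
  -- the cube is inside the ball
  have hsub : Set.univ.pi (fun i => Set.Icc (v i - a) (v i + a))
      ⊆ {x : Fin d → ℝ | ‖toEuc x - v‖ ≤ 1/C} := by
    intro x hx
    simp only [Set.mem_setOf_eq]
    have hnorm : ‖toEuc x - v‖ = Real.sqrt (∑ i, (x i - v i)^2) := by
      rw [EuclideanSpace.norm_eq]
      congr 1
      refine Finset.sum_congr rfl fun i _ => ?_
      rw [Real.norm_eq_abs, sq_abs]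
      simp [toEuc]
    rw [hnorm]
    have hsum : (∑ i, (x i - v i)^2) ≤ (d:ℝ) * a^2 := by
      calc ∑ i, (x i - v i)^2 ≤ ∑ _i : Fin d, a^2 := by
            apply Finset.sum_le_sum
            intro i _
            have hxi := hx i (Set.mem_univ i)
            simp only [Set.mem_Icc] at hxi
            exact sq_le_sq' (by linarith [hxi.1]) (by linarith [hxi.2])
        _ = (d:ℝ) * a^2 := by
            rw [Finset.sum_const, Finset.card_univ, Fintype.card_fin, nsmul_eq_mul]
    calc Real.sqrt (∑ i, (x i - v i)^2) ≤ Real.sqrt ((d:ℝ)*a^2) := Real.sqrt_le_sqrt hsum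
      _ = 1/C := by
          rw [show (d:ℝ) * a^2 = (1/C)^2 by rw [mul_comm, ha2]; field_simp]
          exact Real.sqrt_sq (by positivity)
  -- coordinate variance
  have hdne : ((d:ℝ≥0)) ≠ 0 := Nat.cast_ne_zero.mpr hd.ne'
  have hvne : ((d:ℝ≥0))⁻¹ ≠ 0 := inv_ne_zero hdne
  have hcoe : ((((d:ℝ≥0))⁻¹ : ℝ≥0) : ℝ) = ((d:ℝ))⁻¹ := by
    push_cast; ring
  -- per-coordinate bound
  set K : ℝ := (Real.sqrt (2*Real.pi*((d:ℝ))⁻¹))⁻¹ * (2*a - a^3/(3*((d:ℝ))⁻¹)) with hK_def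
  have hKval : K = (2 - 1/(3*C^2))/(C*Real.sqrt (2*Real.pi)) := by
    rw [hK_def]
    have h1 : (2:ℝ)*Real.pi*((d:ℝ))⁻¹ = (2*Real.pi)/(d:ℝ) := by ring
    have hs2 : Real.sqrt (2*Real.pi/(d:ℝ)) = Real.sqrt (2*Real.pi)/Real.sqrt (d:ℝ) :=
      Real.sqrt_div (by positivity) _
    have h3 : a^3/(3*((d:ℝ))⁻¹) = a*(a^2*(d:ℝ))/3 := by
      field_simp
    rw [h1, hs2, h3, ha2, inv_div]
    rw [ha_def]
    have hsp : (0:ℝ) < Real.sqrt (2*Real.pi) := Real.sqrt_pos.mpr (by positivity)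
    field_simp
  -- product formula for the cube
  have hmeas : stdScaledGauss d (Set.univ.pi (fun i => Set.Icc (v i - a) (v i + a)))
      = ∏ i, gaussianReal 0 ((d:ℝ≥0))⁻¹ (Set.Icc (v i - a) (v i + a)) := by
    rw [stdScaledGauss]
    exact Measure.pi_pi _ _
  -- per coordinate bound
  have hone : ∀ i : Fin d,
      ENNReal.ofReal (Real.exp (-((v i)^2*(d:ℝ))/2) * K)
        ≤ gaussianReal 0 ((d:ℝ≥0))⁻¹ (Set.Icc (v i - a) (v i + a)) := by
    intro i
    have h := oneD ((d:ℝ≥0))⁻¹ hvne (v i) a ha.le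
    rw [hcoe] at h
    have harg : -(v i)^2/(2*((d:ℝ))⁻¹) = -((v i)^2*(d:ℝ))/2 := by
      field_simp
    rw [harg] at h
    exact h
  have hK0 : 0 ≤ K := by
    rw [hKval]
    have h4 : (1:ℝ)/(3*C^2) ≤ 1 := by
      rw [div_le_one (by positivity)]
      nlinarith
    apply div_nonneg (by linarith) (by positivity)
  -- combine the product
  have hprod : ∏ i : Fin d, ENNReal.ofReal (Real.exp (-((v i)^2*(d:ℝ))/2) * K)
      = ENNReal.ofReal (Real.exp (-((∑ i, (v i)^2)*(d:ℝ))/2) * K^d) := by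
    rw [← ENNReal.ofReal_prod_of_nonneg (fun i _ => by positivity)]
    congr 1
    rw [Finset.prod_mul_distrib, Finset.prod_const, Finset.card_univ, Fintype.card_fin]
    congr 1
    rw [← Real.exp_sum]
    congr 1
    have hterm : ∀ i : Fin d, -((v i)^2*(d:ℝ))/2 = (v i)^2 * (-(d:ℝ)/2) := fun i => by ring
    simp_rw [hterm]
    rw [← Finset.sum_mul]
    ring
  -- sum of squares bound
  have hS0 : (0:ℝ) ≤ ∑ i, (v i)^2 := Finset.sum_nonneg fun i _ => sq_nonneg _
  have hS : (∑ i, (v i)^2) ≤ C^2 := by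
    have h := hv
    rw [EuclideanSpace.norm_eq] at h
    have hrw : (∑ i, ‖v i‖^2) = ∑ i, (v i)^2 := by
      refine Finset.sum_congr rfl fun i _ => ?_
      rw [Real.norm_eq_abs, sq_abs]
    rw [hrw] at h
    calc (∑ i, (v i)^2) = (Real.sqrt (∑ i, (v i)^2))^2 := (Real.sq_sqrt hS0).symm
      _ ≤ C^2 := pow_le_pow_left₀ (Real.sqrt_nonneg _) h 2
  have hKexp : Real.exp (-C^2/2) ≤ K := by
    rw [hKval]; exact Kbound C hC
  -- final real inequality
  have hreal : (n:ℝ)^(-(1:ℝ)/10) ≤ Real.exp (-((∑ i, (v i)^2)*(d:ℝ))/2) * K^d := by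
    have e1 : Real.exp (-(C^2*(d:ℝ))/2) ≤ Real.exp (-((∑ i, (v i)^2)*(d:ℝ))/2) :=
      Real.exp_le_exp.mpr (by nlinarith)
    have e3 : (Real.exp (-C^2/2))^d = Real.exp (-(C^2*(d:ℝ))/2) := by
      rw [← Real.exp_nat_mul]; congr 1; ring
    have e2 : Real.exp (-(C^2*(d:ℝ))/2) ≤ K^d := by
      rw [← e3]; exact pow_le_pow_left₀ (Real.exp_nonneg _) hKexp d
    have e4 : Real.exp (-(C^2*(d:ℝ))/2) * Real.exp (-(C^2*(d:ℝ))/2)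
        = Real.exp (-(C^2*(d:ℝ))) := by
      rw [← Real.exp_add]; congr 1; ring
    have e5 : (n:ℝ)^(-(1:ℝ)/10) = Real.exp (Real.log n * (-(1:ℝ)/10)) :=
      Real.rpow_def_of_pos hn0 _
    have e6 : Real.log n * (-(1:ℝ)/10) ≤ -(C^2*(d:ℝ)) := by
      have h10 : (0:ℝ) < 10*C^2 := by positivity
      have := (le_div_iff₀ h10).mp hdlog
      nlinarith
    calc (n:ℝ)^(-(1:ℝ)/10) = Real.exp (Real.log n * (-(1:ℝ)/10)) := e5
      _ ≤ Real.exp (-(C^2*(d:ℝ))) := Real.exp_le_exp.mpr e6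
      _ = Real.exp (-(C^2*(d:ℝ))/2) * Real.exp (-(C^2*(d:ℝ))/2) := e4.symm
      _ ≤ Real.exp (-((∑ i, (v i)^2)*(d:ℝ))/2) * K^d :=
          mul_le_mul e1 e2 (Real.exp_nonneg _) (Real.exp_nonneg _)
  -- put everything together
  calc ENNReal.ofReal ((n:ℝ)^(-(1:ℝ)/10))
      ≤ ENNReal.ofReal (Real.exp (-((∑ i, (v i)^2)*(d:ℝ))/2) * K^d) :=
        ENNReal.ofReal_le_ofReal hreal
    _ = ∏ i : Fin d, ENNReal.ofReal (Real.exp (-((v i)^2*(d:ℝ))/2) * K) := hprod.symm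
    _ ≤ ∏ i, gaussianReal 0 ((d:ℝ≥0))⁻¹ (Set.Icc (v i - a) (v i + a)) :=
        Finset.prod_le_prod' fun i _ => hone i
    _ = stdScaledGauss d (Set.univ.pi (fun i => Set.Icc (v i - a) (v i + a))) := hmeas.symm
    _ ≤ stdScaledGauss d {x | ‖toEuc x - v‖ ≤ 1/C} := measure_mono hsub
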